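/- Let L = ℕ × ℕ × (ℕ ∪ {∞}) with the partial order: (n₁,i₁,j₁) ≤ (n₂,i₂,j₂) iff either (a) n₁ = n₂, i₁ = i₂ and j₁ ≤ j₂, or (b) n₁ = n₂, j₁ = i₂ = j₂ and i₁ ≤ i₂, or (c) n₂ = n₁ + 1, j₂ = ∞ and j₁ ≤ i₂. Then there is no directed subset D of L whose Scott-closure equals L. -/
import Mathlib


/-- The example poset `L = ℕ × ℕ × (ℕ ∪ {∞})`. -/
abbrev MiaoL : Type := ℕ × ℕ × WithTop ℕ

/-- The order on `L`: `(n₁,i₁,j₁) ≤ (n₂,i₂,j₂)` iff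
(a) `n₁ = n₂`, `i₁ = i₂` and `j₁ ≤ j₂`, or
(b) `n₁ = n₂`, `j₁ = i₂ = j₂` and `i₁ ≤ i₂`, or
(c) `n₂ = n₁ + 1`, `j₂ = ∞` and `j₁ ≤ i₂`. -/
def lleL (p q : MiaoL) : Prop :=
  (p.1 = q.1 ∧ p.2.1 = q.2.1 ∧ p.2.2 ≤ q.2.2) ∨
  (p.1 = q.1 ∧ p.2.2 = (q.2.1 : WithTop ℕ) ∧ q.2.2 = (q.2.1 : WithTop ℕ) ∧ p.2.1 ≤ q.2.1) ∨
  (q.1 = p.1 + 1 ∧ q.2.2 = (⊤ : WithTop ℕ) ∧ p.2.2 ≤ (q.2.1 : WithTop ℕ))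

/-- Directed subset with respect to a relation `r`. -/
def RDir {α : Type*} (r : α → α → Prop) (D : Set α) : Prop :=
  D.Nonempty ∧ ∀ x ∈ D, ∀ y ∈ D, ∃ z ∈ D, r x z ∧ r y z

/-- `s` is an upper bound of `D` with respect to `r`. -/
def RUB {α : Type*} (r : α → α → Prop) (D : Set α) (s : α) : Prop := ∀ d ∈ D, r d s

/-- `s` is the least upper bound (supremum) of `D` with respect to `r`. -/
def RLUB {α : Type*} (r : α → α → Prop) (D : Set α) (s : α) : Prop :=
  RUB r D s ∧ ∀ t : α, RUB r D t → r s t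

/-- Scott-open set with respect to a relation `r`: an upper set meeting every directed set
whose supremum exists and lies in it. -/
def RScottOpen {α : Type*} (r : α → α → Prop) (U : Set α) : Prop :=
  (∀ x ∈ U, ∀ y, r x y → y ∈ U) ∧
  ∀ D : Set α, RDir r D → ∀ s : α, RLUB r D s → s ∈ U → (D ∩ U).Nonempty

/-- Closed set in the Scott topology: complement of a Scott-open set. -/
def RScottClosed {α : Type*} (r : α → α → Prop) (C : Set α) : Prop := RScottOpen r Cᶜ

/-- Closure in the Scott topology. -/
def RClosure {α : Type*} (r : α → α → Prop) (A : Set α) : Set α :=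
  ⋂₀ {C : Set α | RScottClosed r C ∧ A ⊆ C}

/-- Compactness in the Scott topology: every cover by Scott-open sets has a finite
subcover. -/
def RCompact {α : Type*} (r : α → α → Prop) (K : Set α) : Prop :=
  ∀ 𝒰 : Set (Set α), (∀ U ∈ 𝒰, RScottOpen r U) → K ⊆ ⋃₀ 𝒰 →
    ∃ 𝒱 ⊆ 𝒰, 𝒱.Finite ∧ K ⊆ ⋃₀ 𝒱

/-- Saturated set: an upper set with respect to `r`. -/
def RSat {α : Type*} (r : α → α → Prop) (K : Set α) : Prop :=
  ∀ x ∈ K, ∀ y, r x y → y ∈ K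

lemma lleL_fst {p q : MiaoL} (h : lleL p q) : p.1 ≤ q.1 ∧ q.1 ≤ p.1 + 1 := by
  rcases h with ⟨h1, _⟩ | ⟨h1, _⟩ | ⟨h1, _⟩ <;> omega

/-- A directed set whose elements all sit at level `N` with finite third coordinate has
an upper bound at level `N`. -/
lemma level_ub {N : ℕ} {E : Set MiaoL} (hne : E.Nonempty)
    (hdir : ∀ x ∈ E, ∀ y ∈ E, ∃ z ∈ E, lleL x z ∧ lleL y z)
    (hlev : ∀ e ∈ E, e.1 = N) (hfin : ∀ e ∈ E, e.2.2 ≠ ⊤) :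
    ∃ t : MiaoL, t.1 = N ∧ RUB lleL E t := by
  obtain ⟨e0, he0⟩ := hne
  by_cases hall : ∀ e ∈ E, e.2.1 = e0.2.1
  · exact ⟨(N, e0.2.1, ⊤), rfl, fun e he => Or.inl ⟨hlev e he, hall e he, le_top⟩⟩
  push_neg at hall
  obtain ⟨e1, he1, hne1⟩ := hall
  obtain ⟨z, hz, h0z, h1z⟩ := hdir e0 he0 e1 he1
  have hzN : z.1 = N := hlev z hz
  -- z is diagonal
  have hzdiag : z.2.2 = (z.2.1 : WithTop ℕ) := by
    rcases h0z with ⟨_, h2, _⟩ | ⟨_, _, h3, _⟩ | ⟨h1, _, _⟩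
    · rcases h1z with ⟨_, h2', _⟩ | ⟨_, _, h3', _⟩ | ⟨h1', _, _⟩
      · exact absurd (h2'.trans h2.symm) hne1
      · exact h3'
      · have := hlev e1 he1; omega
    · exact h3
    · have := hlev e0 he0; omega
  set k := z.2.1 with hk
  have key : ∀ e ∈ E, e.2.1 = k ∨ (e.2.2 = (k : WithTop ℕ) ∧ e.2.1 ≤ k) := by
    intro e he
    obtain ⟨w, hw, hew, hzw⟩ := hdir e he z hz
    have hwN : w.1 = N := hlev w hw
    have hw21 : w.2.1 = k := by
      rcases hzw with ⟨_, h2, _⟩ | ⟨_, h2, _, _⟩ | ⟨h1, _, _⟩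
      · exact h2.symm
      · rw [hzdiag] at h2; exact_mod_cast h2.symm
      · omega
    rcases hew with ⟨_, h2, _⟩ | ⟨_, h2, h3, h4⟩ | ⟨h1, _, _⟩
    · exact Or.inl (h2.trans hw21)
    · exact Or.inr ⟨by rw [h2, hw21], hw21 ▸ h4⟩
    · have := hlev e he; omega
  by_cases hbig : ∃ e2 ∈ E, e2.2.1 = k ∧ (k : WithTop ℕ) < e2.2.2
  · obtain ⟨e2, he2, he2i, he2j⟩ := hbig
    refine ⟨(N, k, ⊤), rfl, fun e he => ?_⟩
    have hek : e.2.1 = k := by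
      rcases key e he with h | ⟨hj, hi⟩
      · exact h
      by_contra hneq
      have hik : e.2.1 < k := lt_of_le_of_ne hi hneq
      obtain ⟨w, hw, hew, h2w⟩ := hdir e he e2 he2
      have hwN : w.1 = N := hlev w hw
      -- analyze h2w : lleL e2 w
      rcases h2w with ⟨_, hw1, hw2⟩ | ⟨_, hw1, hw2, _⟩ | ⟨h1, _, _⟩
      · -- w.2.1 = k, ↑k < w.2.2
        have hwk : w.2.1 = k := he2i ▸ hw1.symm
        have hkw : (k : WithTop ℕ) < w.2.2 := lt_of_lt_of_le he2j hw2
        rcases hew with ⟨_, h2, _⟩ | ⟨_, h2, h3, _⟩ | ⟨h1, _, _⟩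
        · exact absurd (h2.trans hwk) hneq
        · rw [h3, hwk] at hkw; exact lt_irrefl _ hkw
        · have := hlev e he; omega
      · -- e2.2.2 = ↑w.2.1, w diagonal, so k < w.2.1
        have hkw : k < w.2.1 := by
          rw [hw1] at he2j; exact_mod_cast he2j
        rcases hew with ⟨_, h2, _⟩ | ⟨_, h2, h3, _⟩ | ⟨h1, _, _⟩
        · omega
        · rw [hj] at h2
          have : k = w.2.1 := by exact_mod_cast h2
          omega
        · have := hlev e he; omega
      · have := hlev e2 he2; omega
    exact Or.inl ⟨hlev e he, hek, le_top⟩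
  · push_neg at hbig
    refine ⟨z, hzN, fun e he => ?_⟩
    rcases key e he with h | ⟨hj, hi⟩
    · refine Or.inl ⟨(hlev e he).trans hzN.symm, h, ?_⟩
      rw [hzdiag]; exact hbig e he h
    · exact Or.inr (Or.inl ⟨(hlev e he).trans hzN.symm, hj, hzdiag, hi⟩)

lemma CN_closed (N : ℕ) : RScottClosed lleL {p : MiaoL | p.1 ≤ N} := by
  constructor
  · intro x hx y hxy
    simp only [Set.mem_compl_iff, Set.mem_setOf_eq, not_le] at hx ⊢
    have := lleL_fst hxy; omega
  · intro E hE s hs hsU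
    simp only [Set.mem_compl_iff, Set.mem_setOf_eq, not_le] at hsU
    by_contra hcon
    rw [Set.not_nonempty_iff_eq_empty] at hcon
    have hEsub : ∀ e ∈ E, e.1 ≤ N := by
      intro e he
      by_contra h
      exact absurd (Set.mem_inter he (by simpa using h)) (hcon ▸ Set.notMem_empty _)
    have hkey : ∀ e ∈ E, e.1 = N ∧ e.2.2 ≠ ⊤ := by
      intro e he
      have hes := hs.1 e he
      have hf := lleL_fst hes
      have heN : e.1 = N := by have := hEsub e he; omega
      have hsN : s.1 = N + 1 := by have := hEsub e he; omega
      refine ⟨heN, ?_⟩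
      rcases hes with ⟨h1, _⟩ | ⟨h1, _⟩ | ⟨_, _, h3⟩
      · omega
      · omega
      · intro htop; rw [htop] at h3; exact absurd (top_le_iff.mp h3) (by simp)
    obtain ⟨t, htN, htub⟩ := level_ub hE.1 hE.2 (fun e he => (hkey e he).1)
      (fun e he => (hkey e he).2)
    have hst := lleL_fst (hs.2 t htub)
    obtain ⟨e, he⟩ := hE.1
    have := hEsub e he
    have hes := lleL_fst (hs.1 e he)
    have heN := (hkey e he).1
    omega


/-- there is no directed subset of `L` whose Scott-closure is all of `L`. -/
theorem no_directed_dense_subset :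
    ¬ ∃ D : Set MiaoL, RDir lleL D ∧ RClosure lleL D = Set.univ := by
  rintro ⟨D, ⟨⟨d0, hd0⟩, hdir⟩, hcl⟩
  set N := d0.1 + 1 with hN
  have hDsub : D ⊆ {p : MiaoL | p.1 ≤ N} := by
    intro d hd
    obtain ⟨z, hz, hd0z, hdz⟩ := hdir d0 hd0 d hd
    have h1 := lleL_fst hd0z
    have h2 := lleL_fst hdz
    simp only [Set.mem_setOf_eq]; omega
  have hmem : ((N + 1, 0, (0 : WithTop ℕ)) : MiaoL) ∈ RClosure lleL D := by
    rw [hcl]; exact Set.mem_univ _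
  have : ((N + 1, 0, (0 : WithTop ℕ)) : MiaoL) ∈ {p : MiaoL | p.1 ≤ N} :=
    Set.mem_sInter.mp hmem _ ⟨CN_closed N, hDsub⟩
  simp only [Set.mem_setOf_eq] at this
  omega
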